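/- Let α_1,…,α_n be pairwise distinct elements of a finite field F_q and let k, r be integers with 6 ≤ 2k ≤ n and 1 ≤ r ≤ k−1. If every k×k submatrix of G_1 is nonsingular (i.e. the code C_1 generated by G_1 is an [n+1,k] MDS code), then C_1 is not monomially equivalent to any GRS code of length n+1 over F_q; that is, C_1 is a non-GRS MDS code. -/

import Mathlib

open Finset Matrix

/-- Elementary symmetric polynomial `σ_t` evaluated at the values `x 0, …, x (m-1)`. -/
def esymmV {F : Type*} [CommRing F] {m : ℕ} (t : ℕ) (x : Fin m → F) : F :=
  ∑ A ∈ Finset.univ.powersetCard t, ∏ i ∈ A, x i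

/-- Complete homogeneous symmetric polynomial `S_t` evaluated at `x 0, …, x (m-1)`. -/
def hsymmV {F : Type*} [CommRing F] {m : ℕ} (t : ℕ) (x : Fin m → F) : F :=
  ∑ d ∈ Finset.Nat.antidiagonalTuple m t, ∏ i, x i ^ d i

/-- The exponent of the `i`-th row (0-indexed): the elements of
`{0,…,k−r−1} ∪ {k−r+1,…,k}` in increasing order. -/
def expo (k r : ℕ) (i : Fin k) : ℕ := if (i : ℕ) < k - r then (i : ℕ) else (i : ℕ) + 1

/-- The Vandermonde product `∏_{i<j} (α_j − α_i)`. -/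
def vand {F : Type*} [CommRing F] {n : ℕ} (α : Fin n → F) : F :=
  ∏ i : Fin n, ∏ j ∈ Finset.Ioi i, (α j - α i)

/-- The matrix `G_{r,k}`: rows are `(α_1^e, …, α_n^e)` for
`e ∈ {0,…,k−r−1} ∪ {k−r+1,…,k}` in increasing order. -/
def Grk {F : Type*} [Field F] {n : ℕ} (α : Fin n → F) (k r : ℕ) : Matrix (Fin k) (Fin n) F :=
  Matrix.of fun i j => α j ^ expo k r i

/-- The matrix `G_1`: `G_{r,k}` with the extra column `(0,…,0,1)ᵀ` appended. -/
def G1 {F : Type*} [Field F] {n : ℕ} (α : Fin n → F) (k r : ℕ) :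
    Matrix (Fin k) (Fin (n + 1)) F :=
  Matrix.of fun i j =>
    if hj : (j : ℕ) < n then α ⟨j, hj⟩ ^ expo k r i
    else if (i : ℕ) = k - 1 then 1 else 0

/-- The matrix `G_2`: `G_1` with the extra column `(0,…,0,1,δ)ᵀ` appended
(entry `1` in row `k−1`, i.e. index `k−2`, and `δ` in row `k`, i.e. index `k−1`). -/
def G2 {F : Type*} [Field F] {n : ℕ} (α : Fin n → F) (k r : ℕ) (δ : F) :
    Matrix (Fin k) (Fin (n + 2)) F :=
  Matrix.of fun i j =>
    if hj : (j : ℕ) < n then α ⟨j, hj⟩ ^ expo k r i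
    else if (j : ℕ) = n then (if (i : ℕ) = k - 1 then 1 else 0)
    else (if (i : ℕ) = k - 2 then 1 else if (i : ℕ) = k - 1 then δ else 0)

/-- `u_i = ∏_{j ≠ i} (α_i − α_j)⁻¹`. -/
def uCoef {F : Type*} [Field F] {n : ℕ} (α : Fin n → F) (i : Fin n) : F :=
  ∏ j ∈ Finset.univ.erase i, (α i - α j)⁻¹

/-- `Λ_{r,i} = ∑_{j=0}^{r} (−1)^j σ_j α_i^{(n−k)+(r−1)−j}`. -/
def Lam {F : Type*} [Field F] {n : ℕ} (α : Fin n → F) (k r : ℕ) (i : Fin n) : F :=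
  ∑ j ∈ Finset.range (r + 1), (-1 : F) ^ j * esymmV j α * α i ^ ((n - k) + (r - 1) - j)

/-- Every `k×k` submatrix of `G` is nonsingular. -/
def allSubNonsing {F : Type*} [Field F] {k m : ℕ} (G : Matrix (Fin k) (Fin m) F) : Prop :=
  ∀ c : Fin k → Fin m, Function.Injective c → (G.submatrix id c).det ≠ 0

/-- The linear code spanned by the rows of `G`. -/
def rowSpan {F : Type*} [Field F] {k m : ℕ} (G : Matrix (Fin k) (Fin m) F) :
    Submodule F (Fin m → F) :=
  Submodule.span F (Set.range fun i => G i)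

/-- The dual code `C^⊥ = {x : ∑ x_i c_i = 0 for all c ∈ C}`, as a set. -/
def dualSet {F : Type*} [Field F] {m : ℕ} (C : Set (Fin m → F)) : Set (Fin m → F) :=
  {x | ∀ c ∈ C, ∑ i, x i * c i = 0}

/-- The extended code of `C` with respect to `w`. -/
def extCode {F : Type*} [Field F] {m : ℕ} (C : Set (Fin m → F)) (w : Fin m → F) :
    Set (Fin (m + 1) → F) :=
  {y | ∃ c ∈ C, (∀ i : Fin m, y (Fin.castSucc i) = c i) ∧ y (Fin.last m) = ∑ i, w i * c i}

/-- `C` is a GRS code of length `m` and dimension `kk` over `F`: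
evaluation points are pairwise distinct elements of `F ∪ {∞}` (with `∞ = none`),
the multipliers `v i` are nonzero, and `f(∞)` is the coefficient of `x^(kk−1)`. -/
def isGRS {F : Type*} [Field F] (m kk : ℕ) (C : Set (Fin m → F)) : Prop :=
  ∃ (β : Fin m → Option F) (v : Fin m → F),
    Function.Injective β ∧ (∀ i, v i ≠ 0) ∧
    C = {c | ∃ f : Polynomial F, f.degree < (kk : WithBot ℕ) ∧
      ∀ i, c i = v i * (match β i with
        | some x => Polynomial.eval x f
        | none => f.coeff (kk - 1))}

/-- Monomial equivalence of codes. -/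
def monEquiv {F : Type*} [Field F] {m : ℕ} (C C' : Set (Fin m → F)) : Prop :=
  ∃ (π : Equiv.Perm (Fin m)) (lam : Fin m → F),
    (∀ i, lam i ≠ 0) ∧ C' = {y | ∃ c ∈ C, ∀ i, y i = lam i * c (π i)}


/-- decomposition of exponents -/
lemma dec_lemma {k r : ℕ} (hk : 3 ≤ k) (hr1 : 1 ≤ r) (hrk : r ≤ k - 1) {s : ℕ}
    (hs : s ≤ 2*k - 1) (h1 : k - r = 1 → s ≠ 1) (h2 : r = 1 → s ≠ 2*k - 1) :
    ∃ a b : ℕ, a ≤ k ∧ a ≠ k - r ∧ b ≤ k ∧ b ≠ k - r ∧ a + b = s := by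
  by_cases hsk : s ≤ k
  · by_cases hskr : s = k - r
    · exact ⟨k - r - 1, 1, by omega, by omega, by omega, by omega, by omega⟩
    · exact ⟨s, 0, by omega, hskr, by omega, by omega, by omega⟩
  · by_cases hskr : s - k = k - r
    · exact ⟨k - 1, k - r + 1, by omega, by omega, by omega, by omega, by omega⟩
    · exact ⟨k, s - k, by omega, by omega, by omega, hskr, by omega⟩

open Polynomial in
lemma coeff_mul_top {F : Type*} [Field F] (f g : F[X]) (a b : ℕ)
    (hf : f.degree < ((a+1 : ℕ) : WithBot ℕ)) (hg : g.degree < ((b+1 : ℕ) : WithBot ℕ)) :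
    (f*g).coeff (a+b) = f.coeff a * g.coeff b := by
  rw [Polynomial.coeff_mul]
  apply Finset.sum_eq_single_of_mem (a, b) (Finset.HasAntidiagonal.mem_antidiagonal.mpr rfl)
  rintro ⟨x, y⟩ hmem hne
  rw [Finset.HasAntidiagonal.mem_antidiagonal] at hmem
  rcases (by omega : (x = a ∧ y = b) ∨ a < x ∨ b < y) with h | h | h
  · exact absurd (by rw [h.1, h.2]) hne
  · rw [Polynomial.coeff_eq_zero_of_degree_lt (lt_of_lt_of_le hf (by exact_mod_cast h)), zero_mul]
  · rw [Polynomial.coeff_eq_zero_of_degree_lt (lt_of_lt_of_le hg (by exact_mod_cast h)), mul_zero]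

open Polynomial in
lemma vanish_lemma {F : Type*} [Field F] {n N : ℕ} {α : Fin n → F} (hα : Function.Injective α)
    (E : Fin N → ℕ) (hEinj : Function.Injective E) (g : Fin N → F)
    (hElt : ∀ t, g t ≠ 0 → E t < n)
    (hsum : ∀ j : Fin n, ∑ t, g t * α j ^ E t = 0) : ∀ t, g t = 0 := by
  set p : F[X] := ∑ t, C (g t) * X ^ E t with hp
  have hmem : p ∈ degreeLT F n := by
    apply Submodule.sum_mem
    intro t _
    by_cases h : g t = 0
    · simp [h]
    · exact mem_degreeLT.2 (lt_of_le_of_lt (degree_C_mul_X_pow_le _ _)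
        (by exact_mod_cast hElt t h))
  have hpz : p = 0 := by
    rcases eq_or_ne p 0 with h | h
    · exact h
    · apply eq_zero_of_natDegree_lt_card_of_eval_eq_zero p hα
      · intro j
        rw [hp]
        simp only [eval_finset_sum, eval_mul, eval_pow, eval_C, eval_X]
        exact hsum j
      · rw [Fintype.card_fin]
        exact (natDegree_lt_iff_degree_lt h).2 (mem_degreeLT.1 hmem)
  intro t
  have hcoeff : p.coeff (E t) = g t := by
    rw [hp, finset_sum_coeff]
    rw [Finset.sum_eq_single t]
    · simp [coeff_C_mul, coeff_X_pow]
    · intro b _ hb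
      rw [coeff_C_mul, coeff_X_pow, if_neg (fun hEq => hb (hEinj hEq.symm)), mul_zero]
    · intro habs; exact absurd (Finset.mem_univ t) habs
  rw [hpz] at hcoeff
  simpa using hcoeff.symm

open Polynomial in
lemma grs_poly_zero {F : Type*} [Field F] {m kk : ℕ} (hkk2 : 2 ≤ kk) (hkm : kk ≤ m)
    {β : Fin m → Option F} (hβ : Function.Injective β)
    (f : F[X]) (hdeg : f.degree < (kk : WithBot ℕ))
    (h0 : ∀ i, (match β i with
        | some x => Polynomial.eval x f
        | none => f.coeff (kk - 1)) = 0) :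
    f = 0 := by
  by_contra hf0
  have hnd : f.natDegree < kk := (natDegree_lt_iff_degree_lt hf0).2 hdeg
  have hsome : ∀ i : Fin m, β i ≠ none → (β i).isSome := by
    intro i hi
    rcases h : β i with _ | x
    · exact absurd h hi
    · simp
  by_cases hnone : ∃ i0, β i0 = none
  · obtain ⟨i0, hi0⟩ := hnone
    have hc : f.coeff (kk - 1) = 0 := by
      have := h0 i0
      rw [hi0] at this
      exact this
    have hlc : f.coeff f.natDegree ≠ 0 := by
      rw [coeff_natDegree]; exact leadingCoeff_ne_zero.2 hf0
    have hne : f.natDegree ≠ kk - 1 := fun he => hlc (by rw [he]; exact hc)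
    have hnd2 : f.natDegree < kk - 1 := by omega
    have hne' : ∀ i : Fin m, i ≠ i0 → β i ≠ none := by
      intro i hi hcon
      exact hi (hβ (hcon.trans hi0.symm))
    set γ : {i : Fin m // i ≠ i0} → F :=
      fun i => (β i.1).get (hsome i.1 (hne' i.1 i.2)) with hγ
    have hγinj : Function.Injective γ := by
      intro a b hab
      apply Subtype.ext
      apply hβ
      rw [← Option.some_get (hsome a.1 (hne' a.1 a.2)),
        ← Option.some_get (hsome b.1 (hne' b.1 b.2))]
      exact congrArg _ hab
    have heval : ∀ i : {i : Fin m // i ≠ i0}, f.eval (γ i) = 0 := by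
      intro i
      have hbi : β i.1 = some (γ i) := (Option.some_get _).symm
      have := h0 i.1
      rw [hbi] at this
      exact this
    apply hf0
    apply eq_zero_of_natDegree_lt_card_of_eval_eq_zero f hγinj heval
    have hcard : Fintype.card {i : Fin m // i ≠ i0} = m - 1 := by
      rw [Fintype.card_subtype_compl, Fintype.card_subtype_eq, Fintype.card_fin]
    omega
  · push_neg at hnone
    set γ : Fin m → F := fun i => (β i).get (hsome i (hnone i)) with hγ
    have hγinj : Function.Injective γ := by
      intro a b hab
      apply hβ
      rw [← Option.some_get (hsome a (hnone a)), ← Option.some_get (hsome b (hnone b))]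
      exact congrArg _ hab
    have heval : ∀ i, f.eval (γ i) = 0 := by
      intro i
      have hbi : β i = some (γ i) := (Option.some_get _).symm
      have := h0 i
      rw [hbi] at this
      exact this
    apply hf0
    apply eq_zero_of_natDegree_lt_card_of_eval_eq_zero f hγinj heval
    rw [Fintype.card_fin]
    omega

/-- the scaled-permutation linear equivalence of monomial maps -/
noncomputable def scalePermE {F : Type*} [Field F] {m : ℕ} (lam : Fin m → F)
    (hlam : ∀ i, lam i ≠ 0) (π : Equiv.Perm (Fin m)) :
    (Fin m → F) ≃ₗ[F] (Fin m → F) :=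
  LinearEquiv.ofLinear
    { toFun := fun c => fun i => lam i * c (π i)
      map_add' := fun a b => by funext i; simp [mul_add]
      map_smul' := fun c a => by funext i; simp [smul_eq_mul]; ring }
    { toFun := fun c => fun i => (lam (π.symm i))⁻¹ * c (π.symm i)
      map_add' := fun a b => by funext i; simp [mul_add]
      map_smul' := fun c a => by funext i; simp [smul_eq_mul]; ring }
    (by
      ext c i
      simp only [LinearMap.coe_comp, LinearMap.coe_mk, AddHom.coe_mk, Function.comp_apply,
        Equiv.symm_apply_apply, LinearMap.id_coe, id_eq]
      field_simp
      exact mul_div_cancel_left₀ _ (hlam i))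
    (by
      ext c i
      simp only [LinearMap.coe_comp, LinearMap.coe_mk, AddHom.coe_mk, Function.comp_apply,
        Equiv.apply_symm_apply, LinearMap.id_coe, id_eq]
      field_simp
      exact mul_div_cancel_left₀ _ (hlam _))

@[simp] lemma scalePermE_apply {F : Type*} [Field F] {m : ℕ} (lam : Fin m → F)
    (hlam : ∀ i, lam i ≠ 0) (π : Equiv.Perm (Fin m)) (c : Fin m → F) :
    scalePermE lam hlam π c = fun i => lam i * c (π i) := rfl

open Polynomial in
/-- the GRS evaluation linear map -/
noncomputable def grsMap {F : Type*} [Field F] {m : ℕ} (kk : ℕ) (β : Fin m → Option F)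
    (v : Fin m → F) : degreeLT F kk →ₗ[F] (Fin m → F) where
  toFun f := fun i => v i * (match β i with
    | some x => Polynomial.eval x (f : F[X])
    | none => (f : F[X]).coeff (kk - 1))
  map_add' f g := by
    funext i
    rcases hb : β i with _ | x <;>
      simp [hb, mul_add]
  map_smul' c f := by
    funext i
    rcases hb : β i with _ | x <;>
      · simp [hb, smul_eq_mul]; ring

open Polynomial in
@[simp] lemma grsMap_apply {F : Type*} [Field F] {m : ℕ} (kk : ℕ) (β : Fin m → Option F)
    (v : Fin m → F) (f : degreeLT F kk) (i : Fin m) :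
    grsMap kk β v f i = v i * (match β i with
      | some x => Polynomial.eval x (f : F[X])
      | none => (f : F[X]).coeff (kk - 1)) := rfl

open Polynomial in
/-- Theorem 4.6: if the code `C_1` generated by `G_1` is MDS, then it is not monomially
equivalent to any GRS code of length `n+1` over `F`. -/
theorem C1_nonGRS {F : Type*} [Field F] [Fintype F] {n : ℕ}
    (α : Fin n → F) (hα : Function.Injective α) (k r : ℕ)
    (h6 : 6 ≤ 2 * k) (hkn : 2 * k ≤ n) (hr1 : 1 ≤ r) (hrk : r ≤ k - 1)
    (hMDS : allSubNonsing (G1 α k r)) :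
    ∀ (kk : ℕ), 2 ≤ kk → kk ≤ n + 1 → ∀ C' : Set (Fin (n + 1) → F),
      isGRS (n + 1) kk C' →
      ¬ monEquiv (rowSpan (G1 α k r) : Set (Fin (n + 1) → F)) C' := by
  intro kk hkk2 hkkn C' hGRS hmon
  obtain ⟨β, v, hβ, hv, hC'⟩ := hGRS
  obtain ⟨π, lam, hlam, hEq⟩ := hmon
  have hk3 : 3 ≤ k := by omega
  haveI : ∀ N : ℕ, Module.Finite F (degreeLT F N) :=
    fun N => Module.Finite.equiv (degreeLTEquiv F N).symm
  have hdegLT : ∀ N : ℕ, Module.finrank F (degreeLT F N) = N := by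
    intro N
    rw [(degreeLTEquiv F N).finrank_eq, Module.finrank_fin_fun]
  -- rows of G1 are linearly independent
  have hrows : LinearIndependent F (fun i => G1 α k r i) := by
    have hkle : k ≤ n + 1 := by omega
    set c : Fin k → Fin (n+1) := Fin.castLE hkle with hc
    have hcinj : Function.Injective c := Fin.castLE_injective hkle
    have hdet := hMDS c hcinj
    have hA : LinearIndependent F (fun i => (G1 α k r).submatrix id c i) :=
      Matrix.linearIndependent_rows_iff_isUnit.2
        ((Matrix.isUnit_iff_isUnit_det _).2 (isUnit_iff_ne_zero.2 hdet))
    have hcomp : (fun i => (G1 α k r).submatrix id c i)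
        = (LinearMap.funLeft F F c) ∘ (fun i => G1 α k r i) := rfl
    rw [hcomp] at hA
    exact LinearIndependent.of_comp _ hA
  have hfinC1 : Module.finrank F (rowSpan (G1 α k r)) = k := by
    rw [rowSpan, finrank_span_eq_card hrows, Fintype.card_fin]
  set Te := scalePermE lam hlam π with hTe
  have hmapset : (↑(Submodule.map (Te.toLinearMap) (rowSpan (G1 α k r))) :
      Set (Fin (n+1) → F)) = C' := by
    rw [hEq]
    ext y
    simp only [SetLike.mem_coe, Submodule.mem_map, Set.mem_setOf_eq]
    constructor
    · rintro ⟨c, hc, rfl⟩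
      exact ⟨c, hc, fun i => rfl⟩
    · rintro ⟨c, hc, hy⟩
      exact ⟨c, hc, funext fun i => (hy i).symm⟩
  have hrangeset : (↑(LinearMap.range (grsMap kk β v)) : Set (Fin (n+1) → F)) = C' := by
    rw [hC']
    ext y
    simp only [SetLike.mem_coe, LinearMap.mem_range, Set.mem_setOf_eq]
    constructor
    · rintro ⟨⟨f, hf⟩, rfl⟩
      exact ⟨f, Polynomial.mem_degreeLT.1 hf, fun i => rfl⟩
    · rintro ⟨f, hdeg, hy⟩
      exact ⟨⟨f, Polynomial.mem_degreeLT.2 hdeg⟩, funext fun i => (hy i).symm⟩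
  have hinj : Function.Injective (grsMap kk β v) := by
    rw [← LinearMap.ker_eq_bot, LinearMap.ker_eq_bot']
    rintro ⟨f, hf⟩ hf0
    have h0 : ∀ i, (match β i with
        | some x => Polynomial.eval x f
        | none => f.coeff (kk - 1)) = 0 := by
      intro i
      have h1 : v i * (match β i with
          | some x => Polynomial.eval x f
          | none => f.coeff (kk - 1)) = 0 := congrFun hf0 i
      rcases mul_eq_zero.1 h1 with h | h
      · exact absurd h (hv i)
      · exact h
    exact Subtype.ext (grs_poly_zero hkk2 (by omega) hβ f (Polynomial.mem_degreeLT.1 hf) h0)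
  have hkkk : kk = k := by
    have h1 : Module.finrank F (LinearMap.range (grsMap kk β v)) = kk := by
      rw [LinearMap.finrank_range_of_inj hinj, hdegLT]
    have hsubeq : LinearMap.range (grsMap kk β v)
        = Submodule.map (Te.toLinearMap) (rowSpan (G1 α k r)) :=
      SetLike.coe_injective (hrangeset.trans hmapset.symm)
    rw [hsubeq, LinearEquiv.finrank_map_eq, hfinC1] at h1
    omega
  subst hkkk
  -- the (2k-1)-dimensional GRS space absorbing products
  have hlam2ne : ∀ i, lam i * lam i ≠ 0 := fun i => mul_ne_zero (hlam i) (hlam i)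
  set T2 := scalePermE (fun i => lam i * lam i) hlam2ne π with hT2
  set V := LinearMap.range (grsMap (2*kk-1) β (fun i => v i * v i)) with hV
  set W := Submodule.comap (T2.toLinearMap) V with hW
  have hWrank : Module.finrank F W ≤ 2*kk-1 := by
    rw [hW, Submodule.comap_equiv_eq_map_symm, LinearEquiv.finrank_map_eq, hV]
    have h2 := LinearMap.finrank_range_le (grsMap (2*kk-1) β (fun i => v i * v i))
    rwa [hdegLT] at h2
  -- each row is carried into C'
  have hrowC' : ∀ i : Fin kk, Te.toLinearMap (G1 α kk r i) ∈ C' := by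
    intro i
    rw [hEq]
    exact ⟨G1 α kk r i, Submodule.subset_span ⟨i, rfl⟩, fun j => rfl⟩
  -- products of rows lie in W
  have hprodW : ∀ i i' : Fin kk, (fun j => G1 α kk r i j * G1 α kk r i' j) ∈ W := by
    intro i i'
    rw [hW, Submodule.mem_comap]
    have h1 := hrowC' i
    have h2 := hrowC' i'
    rw [hC'] at h1 h2
    obtain ⟨f, hfd, hfc⟩ := h1
    obtain ⟨g, hgd, hgc⟩ := h2
    rw [hV]
    have hmem : f * g ∈ degreeLT F (2*kk-1) := by
      apply Polynomial.mem_degreeLT.2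
      rcases eq_or_ne (f*g) 0 with h | h
      · rw [h, Polynomial.degree_zero]
        exact WithBot.bot_lt_coe _
      · have hfz : f ≠ 0 := fun hh => h (by rw [hh, zero_mul])
        have hgz : g ≠ 0 := fun hh => h (by rw [hh, mul_zero])
        have hd1 : f.natDegree < kk := (Polynomial.natDegree_lt_iff_degree_lt hfz).2 hfd
        have hd2 : g.natDegree < kk := (Polynomial.natDegree_lt_iff_degree_lt hgz).2 hgd
        rw [← Polynomial.natDegree_lt_iff_degree_lt h, Polynomial.natDegree_mul hfz hgz]
        omega
    refine ⟨⟨f*g, hmem⟩, ?_⟩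
    funext j
    have e1 : lam j * G1 α kk r i (π j) = v j * (match β j with
        | some x => Polynomial.eval x f
        | none => f.coeff (kk - 1)) := hfc j
    have e2 : lam j * G1 α kk r i' (π j) = v j * (match β j with
        | some x => Polynomial.eval x g
        | none => g.coeff (kk - 1)) := hgc j
    have hmatch : (match β j with
        | some x => Polynomial.eval x (f*g)
        | none => (f*g).coeff (2*kk-1-1))
        = (match β j with
          | some x => Polynomial.eval x f
          | none => f.coeff (kk - 1))
        * (match β j with
          | some x => Polynomial.eval x g
          | none => g.coeff (kk - 1)) := by
      rcases hb : β j with _ | x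
      · show (f*g).coeff (2*kk-1-1) = f.coeff (kk-1) * g.coeff (kk-1)
        rw [(show 2*kk-1-1 = (kk-1)+(kk-1) by omega)]
        apply coeff_mul_top
        · rw [(show (kk-1)+1 = kk by omega)]; exact hfd
        · rw [(show (kk-1)+1 = kk by omega)]; exact hgd
      · show Polynomial.eval x (f*g) = Polynomial.eval x f * Polynomial.eval x g
        rw [Polynomial.eval_mul]
    show v j * v j * (match β j with
        | some x => Polynomial.eval x (f*g)
        | none => (f*g).coeff (2*kk-1-1))
      = lam j * lam j * (G1 α kk r i (π j) * G1 α kk r i' (π j))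
    calc v j * v j * (match β j with
        | some x => Polynomial.eval x (f*g)
        | none => (f*g).coeff (2*kk-1-1))
        = (v j * (match β j with
          | some x => Polynomial.eval x f
          | none => f.coeff (kk - 1)))
        * (v j * (match β j with
          | some x => Polynomial.eval x g
          | none => g.coeff (kk - 1))) := by rw [hmatch]; ring
      _ = (lam j * G1 α kk r i (π j)) * (lam j * G1 α kk r i' (π j)) := by rw [e1, e2]
      _ = lam j * lam j * (G1 α kk r i (π j) * G1 α kk r i' (π j)) := by ring
  -- exponent family
  set E : Fin (2*kk) → ℕ := fun t =>
    if (t : ℕ) = 2*kk - 1 then 2*kk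
    else if kk - r = 1 ∧ (t : ℕ) ≠ 0 then (t : ℕ) + 1 else (t : ℕ) with hE
  have hEinj : Function.Injective E := by
    intro t t' htt
    simp only [hE] at htt
    have h1 := t.isLt
    have h2 := t'.isLt
    apply Fin.ext
    split_ifs at htt <;> omega
  have hexpoLast : ∀ i : Fin kk, (i : ℕ) = kk - 1 → expo kk r i = kk := by
    intro i hi
    simp only [expo]
    rw [hi, if_neg (by omega)]
    omega
  set w : Fin (2*kk) → (Fin (n+1) → F) := fun t j =>
    if hj : (j : ℕ) < n then α ⟨j, hj⟩ ^ E t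
    else (if (t : ℕ) = 2*kk-1 then 1 else 0) with hw
  have hklt : kk - 1 < kk := by omega
  set klast : Fin kk := ⟨kk-1, hklt⟩ with hklast
  have hwW : ∀ t, w t ∈ W := by
    intro t
    by_cases ht : (t : ℕ) = 2*kk-1
    · have hwt : w t = fun j => G1 α kk r klast j * G1 α kk r klast j := by
        funext j
        simp only [hw, G1, Matrix.of_apply]
        by_cases hj : (j : ℕ) < n
        · simp only [dif_pos hj]
          rw [← pow_add]
          congr 1
          rw [hexpoLast klast rfl]
          simp only [hE]
          rw [if_pos ht]
          omega
        · simp only [dif_neg hj]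
          rw [if_pos ht]
          norm_num
          simp [hklast]
      rw [hwt]; exact hprodW _ _
    · have hEle : E t ≤ 2*kk-1 ∧ (kk - r = 1 → E t ≠ 1) ∧ (r = 1 → E t ≠ 2*kk-1) := by
        have h1 := t.isLt
        simp only [hE]
        split_ifs <;> omega
      obtain ⟨a, b, ha, har, hb, hbr, hab⟩ :=
        dec_lemma hk3 hr1 hrk hEle.1 hEle.2.1 hEle.2.2
      have hia' : (if a < kk - r then a else a - 1) < kk := by split_ifs <;> omega
      have hib' : (if b < kk - r then b else b - 1) < kk := by split_ifs <;> omega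
      set ia : Fin kk := ⟨_, hia'⟩ with hiad
      set ib : Fin kk := ⟨_, hib'⟩ with hibd
      have hea : expo kk r ia = a := by
        simp only [expo, hiad]
        split_ifs <;> omega
      have heb : expo kk r ib = b := by
        simp only [expo, hibd]
        split_ifs <;> omega
      have hwt : w t = fun j => G1 α kk r ia j * G1 α kk r ib j := by
        funext j
        simp only [hw, G1, Matrix.of_apply]
        by_cases hj : (j : ℕ) < n
        · simp only [dif_pos hj]
          rw [hea, heb, ← pow_add, hab]
        · simp only [dif_neg hj]
          rw [if_neg ht]
          by_cases h1 : (ia : ℕ) = kk-1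
          · by_cases h2 : (ib : ℕ) = kk-1
            · exfalso
              have ha2 : a = kk := by rw [← hea, hexpoLast ia h1]
              have hb2 : b = kk := by rw [← heb, hexpoLast ib h2]
              omega
            · rw [if_neg h2, mul_zero]
          · rw [if_neg h1, zero_mul]
      rw [hwt]; exact hprodW _ _
  have hwind : LinearIndependent F w := by
    rw [Fintype.linearIndependent_iff]
    intro g hg
    have hlt : 2*kk - 1 < 2*kk := by omega
    set tl : Fin (2*kk) := ⟨2*kk-1, hlt⟩ with htl
    have hgl : g tl = 0 := by
      have h1 := congrFun hg (Fin.last n)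
      rw [Finset.sum_apply] at h1
      simp only [Pi.smul_apply, smul_eq_mul, Pi.zero_apply] at h1
      rw [Finset.sum_eq_single tl] at h1
      · have hwtl : w tl (Fin.last n) = 1 := by
          simp only [hw]
          rw [dif_neg (by simp)]
          norm_num
          simp [htl]
        rw [hwtl, mul_one] at h1
        exact h1
      · intro t _ htne
        have htv : (t : ℕ) ≠ 2*kk-1 := fun hh => htne (Fin.ext hh)
        have hwz : w t (Fin.last n) = 0 := by
          simp only [hw]
          rw [dif_neg (by simp), if_neg htv]
        rw [hwz, mul_zero]
      · intro habs; exact absurd (Finset.mem_univ _) habs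
    have hcoord : ∀ j : Fin n, ∑ t, g t * α j ^ E t = 0 := by
      intro j
      have h1 := congrFun hg (Fin.castSucc j)
      rw [Finset.sum_apply] at h1
      simp only [Pi.smul_apply, smul_eq_mul, Pi.zero_apply] at h1
      rw [← h1]
      apply Finset.sum_congr rfl
      intro t _
      congr 1
      have hjlt : ((Fin.castSucc j : Fin (n+1)) : ℕ) < n := by simp
      simp only [hw]
      rw [dif_pos hjlt]
      exact congrArg (fun z => z ^ E t) (congrArg α (Fin.ext (by simp)).symm)
    refine vanish_lemma hα E hEinj g ?_ hcoord
    intro t hgt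
    by_cases htt : t = tl
    · exfalso; exact hgt (by rw [htt]; exact hgl)
    · have htv : (t : ℕ) ≠ 2*kk-1 := fun hh => htt (Fin.ext hh)
      have h1 := t.isLt
      simp only [hE]
      split_ifs <;> omega
  have hspan : Submodule.span F (Set.range w) ≤ W :=
    Submodule.span_le.2 (by rintro x ⟨t, rfl⟩; exact hwW t)
  have hfin : Module.finrank F (Submodule.span F (Set.range w)) = 2*kk := by
    rw [finrank_span_eq_card hwind, Fintype.card_fin]
  have hmono := Submodule.finrank_mono hspan
  omega
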